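/- Let (X, d_X) be a finite metric space and μ a positive measure on X. For every Δ > 0 there exists a finitely supported probability distribution over partitions P of X such that: every partition in the support is Δ-bounded (each part has diameter at most Δ); and for every x ∈ X and every t with 0 < t ≤ Δ/8, the probability that the closed ball B_X(x,t) is not contained in the part P(x) containing x is at most (16t/Δ)·log( μ(B_X(x,Δ)) / μ(B_X(x,Δ/8)) ). -/

import Mathlib

/-- `d` is a metric on `X`. -/
def IsMetric {X : Type*} (d : X → X → ℝ) : Prop :=
  (∀ x y, 0 ≤ d x y) ∧ (∀ x y, d x y = 0 ↔ x = y) ∧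
  (∀ x y, d x y = d y x) ∧ (∀ x y z, d x z ≤ d x y + d y z)

/-- The closed ball of radius `t` around `x`, as a finset. -/
noncomputable def cball {X : Type*} [Fintype X] (d : X → X → ℝ) (x : X) (t : ℝ) :
    Finset X :=
  Finset.univ.filter (fun y => d x y ≤ t)

namespace FRT

open Finset
open scoped Classical

lemma mem_cball {X : Type*} [Fintype X] {d : X → X → ℝ} {x y : X} {t : ℝ} :
    y ∈ cball d x t ↔ d x y ≤ t := by
  classical
  simp [cball]

section Ords

variable {X : Type} [DecidableEq X]

/-- weight of an ordering under biased sampling without replacement. -/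
noncomputable def Wt (μ : X → ℝ) : List X → ℝ
  | [] => 1
  | a :: l => (μ a / ((a :: l).map μ).sum) * Wt μ l

/-- all orderings of a finset, as lists. -/
noncomputable def ords : Finset X → Finset (List X)
  | A =>
    if h : A = ∅ then {[]}
    else A.attach.biUnion (fun a => (ords (A.erase a.1)).image (a.1 :: ·))
termination_by A => A.card
decreasing_by exact Finset.card_erase_lt_of_mem a.2

lemma ords_spec : ∀ (A : Finset X), ∀ l ∈ ords A, l.Nodup ∧ l.toFinset = A := by
  intro A
  induction A using Finset.strongInductionOn with
  | _ A ih =>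
    intro l hl
    rw [ords] at hl
    by_cases h : A = ∅
    · rw [dif_pos h] at hl
      simp only [Finset.mem_singleton] at hl
      subst hl; subst h; simp
    · rw [dif_neg h] at hl
      obtain ⟨a, _, hl⟩ := Finset.mem_biUnion.1 hl
      obtain ⟨l', hl', rfl⟩ := Finset.mem_image.1 hl
      obtain ⟨hnd, hfin⟩ := ih (A.erase a.1) (Finset.erase_ssubset a.2) l' hl'
      constructor
      · refine List.nodup_cons.2 ⟨?_, hnd⟩
        intro hmem
        have : a.1 ∈ A.erase a.1 := by
          rw [← hfin]; exact List.mem_toFinset.2 hmem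
        exact (Finset.notMem_erase _ _) this
      · simp only [List.toFinset_cons, hfin]
        exact Finset.insert_erase a.2

lemma sum_ords_eq (A : Finset X) (hA : A ≠ ∅) (f : List X → ℝ) :
    ∑ l ∈ ords A, f l = ∑ a ∈ A, ∑ l' ∈ ords (A.erase a), f (a :: l') := by
  rw [ords, dif_neg hA]
  rw [Finset.sum_biUnion]
  · rw [← Finset.sum_attach A (fun a => ∑ l' ∈ ords (A.erase a), f (a :: l'))]
    refine Finset.sum_congr rfl fun a _ => ?_
    exact Finset.sum_image (fun x _ y _ h => by injection h)
  · intro a _ b _ hab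
    simp only [Function.onFun]
    rw [Finset.disjoint_left]
    intro l hla hlb
    obtain ⟨la, _, rfl⟩ := Finset.mem_image.1 hla
    obtain ⟨lb, _, h⟩ := Finset.mem_image.1 hlb
    exact hab (Subtype.ext (by injection h with h1 _; exact h1.symm))

lemma list_sum_eq (μ : X → ℝ) {A : Finset X} {l : List X} (hl : l ∈ ords A) :
    (l.map μ).sum = ∑ y ∈ A, μ y := by
  obtain ⟨hnd, hfin⟩ := ords_spec A l hl
  rw [← hfin, List.sum_toFinset μ hnd]

lemma sum_Wt (μ : X → ℝ) (hμ : ∀ x, 0 < μ x) :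
    ∀ A : Finset X, ∑ l ∈ ords A, Wt μ l = 1 := by
  intro A
  induction A using Finset.strongInductionOn with
  | _ A ih =>
    by_cases h : A = ∅
    · subst h; rw [ords]; simp [Wt]
    · rw [sum_ords_eq A h]
      have hApos : 0 < ∑ y ∈ A, μ y :=
        Finset.sum_pos (fun y _ => hμ y) (Finset.nonempty_of_ne_empty h)
      have : ∀ a ∈ A, ∑ l' ∈ ords (A.erase a), Wt μ (a :: l')
          = μ a / ∑ y ∈ A, μ y := by
        intro a ha
        have : ∀ l' ∈ ords (A.erase a), Wt μ (a :: l')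
            = (μ a / ∑ y ∈ A, μ y) * Wt μ l' := by
          intro l' hl'
          show (μ a / ((a :: l').map μ).sum) * Wt μ l' = _
          have : ((a :: l').map μ).sum = ∑ y ∈ A, μ y := by
            rw [List.map_cons, List.sum_cons, list_sum_eq μ hl',
              Finset.add_sum_erase _ _ ha]
          rw [this]
        rw [Finset.sum_congr rfl this, ← Finset.mul_sum,
          ih (A.erase a) (Finset.erase_ssubset ha), mul_one]
      rw [Finset.sum_congr rfl this, ← Finset.sum_div, div_self (ne_of_gt hApos)]

omit [DecidableEq X] in
lemma Wt_nonneg (μ : X → ℝ) (hμ : ∀ x, 0 < μ x) : ∀ l : List X, 0 ≤ Wt μ l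
  | [] => zero_le_one
  | a :: l => by
    refine mul_nonneg (div_nonneg (le_of_lt (hμ a)) ?_) (Wt_nonneg μ hμ l)
    refine List.sum_nonneg fun x hx => ?_
    obtain ⟨y, _, rfl⟩ := List.mem_map.1 hx
    exact le_of_lt (hμ y)

/-- key lemma: probability that `c` is the first element of `S` in a biased ordering. -/
lemma key_first (μ : X → ℝ) (hμ : ∀ x, 0 < μ x) (S : Finset X) (c : X) (hc : c ∈ S)
    (p : X → Bool) (hp : ∀ z, p z = true ↔ z ∈ S) :
    ∀ A : Finset X, S ⊆ A →
    ∑ l ∈ ords A, (if l.find? p = some c then Wt μ l else 0)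
      = μ c / ∑ y ∈ S, μ y := by
  intro A
  induction A using Finset.strongInductionOn with
  | _ A ih =>
    intro hSA
    have hA : A ≠ ∅ := fun h => by simp [h] at hSA; exact (Finset.notMem_empty c) (hSA ▸ hc)
    have hApos : 0 < ∑ y ∈ A, μ y :=
      Finset.sum_pos (fun y _ => hμ y) (Finset.nonempty_of_ne_empty hA)
    have hSpos : 0 < ∑ y ∈ S, μ y := Finset.sum_pos (fun y _ => hμ y) ⟨c, hc⟩
    rw [sum_ords_eq A hA]
    have hsplit : ∀ a ∈ A, ∑ l' ∈ ords (A.erase a),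
        (if (a :: l').find? p = some c then Wt μ (a :: l') else 0)
        = (if a ∈ S then (if a = c then μ a / ∑ y ∈ A, μ y else 0)
           else (μ a / ∑ y ∈ A, μ y) * (μ c / ∑ y ∈ S, μ y)) := by
      intro a ha
      have hWt : ∀ l' ∈ ords (A.erase a), Wt μ (a :: l')
          = (μ a / ∑ y ∈ A, μ y) * Wt μ l' := by
        intro l' hl'
        show (μ a / ((a :: l').map μ).sum) * Wt μ l' = _
        rw [List.map_cons, List.sum_cons, list_sum_eq μ hl', Finset.add_sum_erase _ _ ha]
      by_cases haS : a ∈ S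
      · have hpa : p a = true := (hp a).2 haS
        have hfind : ∀ l' : List X, (a :: l').find? p = some a :=
          fun l' => List.find?_cons_of_pos (l := l') hpa
        simp only [hfind, if_pos haS, Option.some_inj]
        by_cases hac : a = c
        · rw [if_pos hac]
          calc ∑ l' ∈ ords (A.erase a), (if a = c then Wt μ (a :: l') else 0)
              = ∑ l' ∈ ords (A.erase a), Wt μ (a :: l') := by
                refine Finset.sum_congr rfl fun l' _ => if_pos hac
            _ = ∑ l' ∈ ords (A.erase a), (μ a / ∑ y ∈ A, μ y) * Wt μ l' :=
                Finset.sum_congr rfl hWt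
            _ = μ a / ∑ y ∈ A, μ y := by
                rw [← Finset.mul_sum, sum_Wt μ hμ, mul_one]
        · rw [if_neg hac]
          refine Finset.sum_eq_zero fun l' _ => if_neg hac
      · have hpa : ¬ p a = true := fun h => haS ((hp a).1 h)
        have hfind : ∀ l' : List X, (a :: l').find? p = l'.find? p :=
          fun l' => List.find?_cons_of_neg (l := l') hpa
        simp only [hfind, if_neg haS]
        have : ∀ l' ∈ ords (A.erase a),
            (if l'.find? p = some c then Wt μ (a :: l') else 0)
            = (μ a / ∑ y ∈ A, μ y) *
              (if l'.find? p = some c then Wt μ l' else 0) := by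
          intro l' hl'
          by_cases hf : l'.find? p = some c
          · rw [if_pos hf, if_pos hf, hWt l' hl']
          · rw [if_neg hf, if_neg hf, mul_zero]
        rw [Finset.sum_congr rfl this, ← Finset.mul_sum]
        congr 1
        exact ih (A.erase a) (Finset.erase_ssubset ha)
          (Finset.subset_erase.2 ⟨hSA, haS⟩)
    rw [Finset.sum_congr rfl hsplit]
    rw [← Finset.sum_sdiff (hSA)]
    have h1 : ∑ a ∈ S, (if a ∈ S then (if a = c then μ a / ∑ y ∈ A, μ y else 0)
        else (μ a / ∑ y ∈ A, μ y) * (μ c / ∑ y ∈ S, μ y)) = μ c / ∑ y ∈ A, μ y := by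
      rw [Finset.sum_congr rfl (fun a ha => if_pos ha)]
      rw [Finset.sum_ite_eq' S c (fun a => μ a / ∑ y ∈ A, μ y)] at *
      · simp [hc]
    have h2 : ∑ a ∈ A \ S, (if a ∈ S then (if a = c then μ a / ∑ y ∈ A, μ y else 0)
        else (μ a / ∑ y ∈ A, μ y) * (μ c / ∑ y ∈ S, μ y))
        = ((∑ y ∈ A, μ y) - ∑ y ∈ S, μ y) / (∑ y ∈ A, μ y) * (μ c / ∑ y ∈ S, μ y) := by
      have : ∀ a ∈ A \ S, (if a ∈ S then (if a = c then μ a / ∑ y ∈ A, μ y else 0)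
          else (μ a / ∑ y ∈ A, μ y) * (μ c / ∑ y ∈ S, μ y))
          = (μ a / ∑ y ∈ A, μ y) * (μ c / ∑ y ∈ S, μ y) := by
        intro a ha
        rw [if_neg (Finset.mem_sdiff.1 ha).2]
      rw [Finset.sum_congr rfl this, ← Finset.sum_mul, ← Finset.sum_div,
        Finset.sum_sdiff_eq_sub hSA]
    rw [h2, h1]
    field_simp
    ring

end Ords

section Partition

variable {X : Type} [Fintype X]

/-- center of the cluster containing `y`. -/
noncomputable def ctr (d : X → X → ℝ) (l : List X) (R : ℝ) (y : X) : X :=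
  (l.find? (fun c => decide (d c y ≤ R))).getD y

noncomputable def PartOf (d : X → X → ℝ) (l : List X) (R : ℝ) (y : X) : Finset X :=
  Finset.univ.filter (fun z => ctr d l R z = ctr d l R y)

omit [Fintype X] in
lemma ctr_spec {d : X → X → ℝ} (hd : IsMetric d) {l : List X} (hl : ∀ z : X, z ∈ l)
    {R : ℝ} (hR : 0 ≤ R) (y : X) :
    l.find? (fun c => decide (d c y ≤ R)) = some (ctr d l R y) ∧ d (ctr d l R y) y ≤ R := by
  have hsome : (l.find? (fun c => decide (d c y ≤ R))).isSome := by
    rw [List.find?_isSome]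
    exact ⟨y, hl y, by simp [(hd.2.1 y y).2 rfl, hR]⟩
  obtain ⟨v, hv⟩ := Option.isSome_iff_exists.1 hsome
  have hctr : ctr d l R y = v := by rw [ctr, hv]; rfl
  rw [hctr, hv]
  have := List.find?_some hv
  simp only [decide_eq_true_eq] at this
  exact ⟨rfl, this⟩

lemma mem_PartOf_self (d : X → X → ℝ) (l : List X) (R : ℝ) (y : X) :
    y ∈ PartOf d l R y := by
  simp [PartOf]

lemma PartOf_eq_of_mem {d : X → X → ℝ} {l : List X} {R : ℝ} {y z : X}
    (h : z ∈ PartOf d l R y) : PartOf d l R z = PartOf d l R y := by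
  have h2 : ctr d l R z = ctr d l R y := by
    simpa [PartOf] using h
  unfold PartOf
  rw [h2]

lemma PartOf_diam {d : X → X → ℝ} (hd : IsMetric d) {l : List X} (hl : ∀ z : X, z ∈ l)
    {R : ℝ} (hR : 0 ≤ R) {x a b : X} (ha : a ∈ PartOf d l R x) (hb : b ∈ PartOf d l R x) :
    d a b ≤ 2 * R := by
  simp only [PartOf, Finset.mem_filter] at ha hb
  have h1 := (ctr_spec hd hl hR a).2
  have h2 := (ctr_spec hd hl hR b).2
  rw [ha.2] at h1; rw [hb.2] at h2
  calc d a b ≤ d a (ctr d l R x) + d (ctr d l R x) b := hd.2.2.2 _ _ _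
    _ = d (ctr d l R x) a + d (ctr d l R x) b := by rw [hd.2.2.1]
    _ ≤ R + R := add_le_add h1 h2
    _ = 2 * R := by ring

omit [Fintype X] in
lemma find?_trans {l : List X} {p q : X → Bool} {b : X}
    (hfind : l.find? p = some b) (hqb : q b = true)
    (himp : ∀ a ∈ l, q a = true → p a = true) :
    l.find? q = some b := by
  induction l with
  | nil => simp at hfind
  | cons a l ih =>
    rw [List.find?_cons] at hfind ⊢
    cases hpa : p a with
    | true =>
      rw [hpa] at hfind
      have hab : a = b := by injection hfind
      subst hab
      rw [hqb]
    | false =>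
      rw [hpa] at hfind
      have hqa : q a = false := by
        cases hqa : q a with
        | true => rw [himp a (List.mem_cons_self (a := a) (l := l)) hqa] at hpa; exact absurd hpa (by simp)
        | false => rfl
      rw [hqa]
      exact ih hfind (fun a' ha' hq => himp a' (List.mem_cons_of_mem _ ha') hq)

lemma PartOf_congr {d : X → X → ℝ} {l : List X} {R R' : ℝ}
    (h : ∀ c y, d c y ≤ R ↔ d c y ≤ R') :
    PartOf d l R = PartOf d l R' := by
  have hc : ctr d l R = ctr d l R' := by
    funext y
    rw [ctr, ctr]
    have hp : (fun c => decide (d c y ≤ R)) = (fun c => decide (d c y ≤ R')) := by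
      funext c
      exact decide_eq_decide.2 (h c y)
    rw [hp]
  funext y
  rw [PartOf, PartOf, hc]

/-- Blame lemma: if the ball `B(x,t)` is cut, some center `c` is first in `B(x, d(c,x))`
and `R` lies in its window. -/
lemma blame {d : X → X → ℝ} (hd : IsMetric d) {l : List X} (hl : ∀ z : X, z ∈ l)
    {x : X} {t R Δ : ℝ} (ht : 0 < t) (ht8 : t ≤ Δ / 8) (hR1 : Δ / 4 ≤ R) (hR2 : R < Δ / 2)
    (hcut : ¬ cball d x t ⊆ PartOf d l R x) :
    ∃ c : X, (d c x - t ≤ R ∧ R < d c x + t) ∧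
      l.find? (fun z => decide (z ∈ cball d x (d c x))) = some c ∧
      Δ / 8 < d c x ∧ d c x ≤ Δ := by
  have hΔ : 0 < Δ := by linarith
  have hR0 : 0 ≤ R := by linarith
  have hsome : (l.find? (fun z => decide (z ∈ cball d x (R + t)))).isSome := by
    rw [List.find?_isSome]
    refine ⟨x, hl x, ?_⟩
    simp only [decide_eq_true_eq, mem_cball]
    rw [(hd.2.1 x x).2 rfl]; linarith
  obtain ⟨b, hb⟩ := Option.isSome_iff_exists.1 hsome
  have hbW : d x b ≤ R + t := by
    have := List.find?_some hb
    simpa only [decide_eq_true_eq, mem_cball] using this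
  have hdbx : d b x ≤ R + t := by rw [hd.2.2.1]; exact hbW
  by_cases hnear : d b x ≤ R - t
  · exfalso
    apply hcut
    intro y hy
    rw [mem_cball] at hy
    have hctr : ∀ y' : X, d x y' ≤ t → ctr d l R y' = b := by
      intro y' hy'
      have hfind : l.find? (fun c => decide (d c y' ≤ R)) = some b := by
        refine find?_trans hb ?_ ?_
        · simp only [decide_eq_true_eq]
          calc d b y' ≤ d b x + d x y' := hd.2.2.2 _ _ _
            _ ≤ (R - t) + t := add_le_add hnear hy'
            _ = R := by ring
        · intro a _ hq
          simp only [decide_eq_true_eq, mem_cball] at hq ⊢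
          calc d x a ≤ d x y' + d y' a := hd.2.2.2 _ _ _
            _ = d x y' + d a y' := by rw [hd.2.2.1 y' a]
            _ ≤ t + R := add_le_add hy' hq
            _ = R + t := by ring
      rw [ctr, hfind]
      rfl
    simp only [PartOf, Finset.mem_filter, Finset.mem_univ, true_and]
    rw [hctr y hy, hctr x (by rw [(hd.2.1 x x).2 rfl]; linarith)]
  · push_neg at hnear
    refine ⟨b, ⟨by linarith, by linarith⟩, ?_, by linarith, by linarith⟩
    refine find?_trans hb ?_ ?_
    · simp only [decide_eq_true_eq, mem_cball]
      rw [hd.2.2.1 x b]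
    · intro a _ hq
      simp only [decide_eq_true_eq, mem_cball] at hq ⊢
      linarith

end Partition

/-- telescoping sum bound: `∑ μ(c)/v(c) ≤ log((base + μ(A))/base)`. -/
lemma telescope {X : Type} [DecidableEq X] (μ : X → ℝ) (hμ : ∀ x, 0 < μ x) (key : X → ℝ)
    (base : ℝ) (hbase : 0 < base) :
    ∀ A : Finset X, ∀ v : X → ℝ,
    (∀ c ∈ A, base + ∑ c' ∈ A.filter (fun c' => key c' ≤ key c), μ c' ≤ v c) →
    ∑ c ∈ A, μ c / v c ≤ Real.log ((base + ∑ c ∈ A, μ c) / base) := by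
  intro A
  induction A using Finset.strongInductionOn with
  | _ A ih =>
    intro v hv
    rcases Finset.eq_empty_or_nonempty A with rfl | hA
    · simp [div_self (ne_of_gt hbase)]
    · obtain ⟨c₀, hc₀A, hc₀max⟩ := Finset.exists_max_image A key hA
      set T : ℝ := base + ∑ c ∈ A, μ c with hT
      set T' : ℝ := base + ∑ c ∈ A.erase c₀, μ c with hT'
      have hsum_nonneg : ∀ (s : Finset X), (0:ℝ) ≤ ∑ c ∈ s, μ c :=
        fun s => Finset.sum_nonneg fun c _ => le_of_lt (hμ c)
      have hT'pos : 0 < T' := by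
        have := hsum_nonneg (A.erase c₀); rw [hT']; linarith
      have hTT' : T = T' + μ c₀ := by
        rw [hT, hT', ← Finset.add_sum_erase A μ hc₀A]; ring
      have hTpos : 0 < T := by rw [hTT']; have := hμ c₀; linarith
      have hvT : T ≤ v c₀ := by
        have := hv c₀ hc₀A
        rwa [Finset.filter_true_of_mem (fun c hc => hc₀max c hc)] at this
      have hterm : μ c₀ / v c₀ ≤ Real.log T - Real.log T' := by
        have h1 : μ c₀ / v c₀ ≤ μ c₀ / T :=
          div_le_div_of_nonneg_left (le_of_lt (hμ c₀)) hTpos hvT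
        have h2 : Real.log (T' / T) ≤ T' / T - 1 :=
          Real.log_le_sub_one_of_pos (by positivity)
        rw [Real.log_div (ne_of_gt hT'pos) (ne_of_gt hTpos)] at h2
        have h3 : T' / T - 1 = -(μ c₀ / T) := by
          field_simp
          linarith [hTT']
        rw [h3] at h2
        have h4 : μ c₀ / T ≤ Real.log T - Real.log T' := by linarith
        linarith
      have hrest : ∑ c ∈ A.erase c₀, μ c / v c ≤ Real.log (T' / base) := by
        refine ih (A.erase c₀) (Finset.erase_ssubset hc₀A) v ?_
        intro c hc
        refine le_trans ?_ (hv c (Finset.mem_of_mem_erase hc))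
        have hsub : (A.erase c₀).filter (fun c' => key c' ≤ key c) ⊆
            A.filter (fun c' => key c' ≤ key c) :=
          Finset.filter_subset_filter _ (Finset.erase_subset _ _)
        have := Finset.sum_le_sum_of_subset_of_nonneg hsub
          (fun c' _ _ => le_of_lt (hμ c'))
        linarith
      have hsplit : ∑ c ∈ A, μ c / v c = μ c₀ / v c₀ + ∑ c ∈ A.erase c₀, μ c / v c :=
        (Finset.add_sum_erase A (fun c => μ c / v c) hc₀A).symm
      rw [hsplit]
      have hlogs : Real.log (T' / base) = Real.log T' - Real.log base :=
        Real.log_div (ne_of_gt hT'pos) (ne_of_gt hbase)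
      have hlogT : Real.log (T / base) = Real.log T - Real.log base :=
        Real.log_div (ne_of_gt hTpos) (ne_of_gt hbase)
      rw [hlogT]
      rw [hlogs] at hrest
      linarith

section Volume

variable {X : Type} [Fintype X]

lemma cut_vol {d : X → X → ℝ} (hd : IsMetric d)
    {l : List X} (hl : ∀ z : X, z ∈ l) {x : X} {t Δ : ℝ} (ht : 0 < t) (ht8 : t ≤ Δ / 8)
    (L : List ℝ) (hsort : List.Pairwise (· < ·) L)
    (hrange : ∀ r ∈ L, Δ / 4 ≤ r ∧ r ≤ Δ / 2)
    (hgrid : ∀ c y : X, Δ / 4 ≤ d c y → d c y ≤ Δ / 2 → d c y ∈ L) :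
    ∑ j ∈ (Finset.range (L.length - 1)).filter
        (fun j => ¬ cball d x t ⊆ PartOf d l (L.getD j 0) x),
      (L.getD (j+1) 0 - L.getD j 0)
    ≤ ∑ _c ∈ Finset.univ.filter (fun c =>
        l.find? (fun z => decide (z ∈ cball d x (d c x))) = some c ∧
        Δ / 8 < d c x ∧ d c x ≤ Δ), (2 * t) := by
  set K := L.length - 1 with hK
  set Lg : ℕ → ℝ := fun j => L.getD j 0 with hLg
  set filt := (Finset.range K).filter
      (fun j => ¬ cball d x t ⊆ PartOf d l (Lg j) x) with hfilt
  set G := Finset.univ.filter (fun c =>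
        l.find? (fun z => decide (z ∈ cball d x (d c x))) = some c ∧
        Δ / 8 < d c x ∧ d c x ≤ Δ) with hG
  have hjlen : ∀ j ∈ filt, j < K ∧ j + 1 < L.length := by
    intro j hj
    have := Finset.mem_filter.1 hj
    have hjK := Finset.mem_range.1 this.1
    exact ⟨hjK, by omega⟩
  have hmono : ∀ i j : ℕ, i < j → j < L.length → Lg i < Lg j := by
    intro i j hij hj
    have hi : i < L.length := lt_trans hij hj
    show L.getD i 0 < L.getD j 0
    rw [List.getD_eq_getElem L 0 hi, List.getD_eq_getElem L 0 hj]
    have := List.pairwise_iff_get.1 hsort ⟨i, hi⟩ ⟨j, hj⟩ hij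
    simpa using this
  have hmono' : ∀ i j : ℕ, i ≤ j → j < L.length → Lg i ≤ Lg j := by
    intro i j hij hj
    rcases Nat.eq_or_lt_of_le hij with rfl | h
    · exact le_refl _
    · exact le_of_lt (hmono i j h hj)
  have hmemL : ∀ j : ℕ, j < L.length → Lg j ∈ L := by
    intro j hj
    show L.getD j 0 ∈ L
    rw [List.getD_eq_getElem L 0 hj]
    exact List.getElem_mem hj
  have hcover : ∀ j ∈ filt, Set.Ico (Lg j) (Lg (j+1)) ⊆
      ⋃ c ∈ G, Set.Ico (d c x - t) (d c x + t) := by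
    intro j hj R hR
    obtain ⟨hjK, hj1⟩ := hjlen j hj
    obtain ⟨hR1, hR2⟩ := hR
    have hrj := hrange _ (hmemL j (by omega))
    have hrj1 := hrange _ (hmemL (j+1) hj1)
    have hR4 : Δ / 4 ≤ R := le_trans hrj.1 hR1
    have hR2' : R < Δ / 2 := lt_of_lt_of_le hR2 hrj1.2
    have hcongr : PartOf d l R = PartOf d l (Lg j) := by
      apply PartOf_congr
      intro c y
      constructor
      · intro hcy
        by_contra hgt
        push_neg at hgt
        have h1 : Δ / 4 ≤ d c y := le_trans hrj.1 (le_of_lt hgt)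
        have h2 : d c y ≤ Δ / 2 := le_trans (le_trans hcy (le_of_lt hR2)) hrj1.2
        have hmem := hgrid c y h1 h2
        obtain ⟨k, hk, hke⟩ := List.mem_iff_getElem.1 hmem
        have hkL : Lg k = d c y := by
          show L.getD k 0 = d c y
          rw [List.getD_eq_getElem L 0 hk]; exact hke
        have hjk : j < k := by
          by_contra hkj
          push_neg at hkj
          have := hmono' k j hkj (by omega)
          rw [hkL] at this
          exact absurd this (not_le.2 hgt)
        have : Lg (j+1) ≤ Lg k := hmono' (j+1) k (by omega) hk
        rw [hkL] at this
        linarith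
      · intro hcy
        exact le_trans hcy hR1
    have hcut : ¬ cball d x t ⊆ PartOf d l R x := by
      rw [hcongr]
      exact (Finset.mem_filter.1 hj).2
    obtain ⟨c, ⟨hw1, hw2⟩, hfind, hlo, hhi⟩ := blame hd hl ht ht8 hR4 hR2' hcut
    have hcG : c ∈ G := by
      rw [hG, Finset.mem_filter]
      exact ⟨Finset.mem_univ c, hfind, hlo, hhi⟩
    exact Set.mem_biUnion hcG ⟨hw1, hw2⟩
  have hdisj : (↑filt : Set ℕ).PairwiseDisjoint
      (fun j => Set.Ico (Lg j) (Lg (j+1))) := by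
    intro i hi j hj hij
    simp only [Finset.coe_sort_coe, Finset.mem_coe] at hi hj
    obtain ⟨hiK, hi1⟩ := hjlen i hi
    obtain ⟨hjK, hj1⟩ := hjlen j hj
    rcases lt_or_gt_of_ne hij with h | h
    · refine Set.Ico_disjoint_Ico.2 ?_
      refine le_trans inf_le_left (le_trans ?_ le_sup_right)
      exact hmono' (i+1) j h (by omega)
    · refine Set.Ico_disjoint_Ico.2 ?_
      refine le_trans inf_le_right (le_trans ?_ le_sup_left)
      exact hmono' (j+1) i h (by omega)
  have hE : ∑ j ∈ filt, ENNReal.ofReal (Lg (j+1) - Lg j)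
      ≤ ∑ _c ∈ G, ENNReal.ofReal (2 * t) := by
    calc ∑ j ∈ filt, ENNReal.ofReal (Lg (j+1) - Lg j)
        = ∑ j ∈ filt, MeasureTheory.volume (Set.Ico (Lg j) (Lg (j+1))) := by
          refine Finset.sum_congr rfl fun j hj => ?_
          rw [Real.volume_Ico]
      _ = MeasureTheory.volume (⋃ j ∈ filt, Set.Ico (Lg j) (Lg (j+1))) :=
          (MeasureTheory.measure_biUnion_finset hdisj
            (fun j _ => measurableSet_Ico)).symm
      _ ≤ MeasureTheory.volume (⋃ c ∈ G, Set.Ico (d c x - t) (d c x + t)) :=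
          MeasureTheory.measure_mono (Set.iUnion₂_subset hcover)
      _ ≤ ∑ c ∈ G, MeasureTheory.volume (Set.Ico (d c x - t) (d c x + t)) :=
          MeasureTheory.measure_biUnion_finset_le G _
      _ = ∑ _c ∈ G, ENNReal.ofReal (2 * t) := by
          refine Finset.sum_congr rfl fun c hc => ?_
          rw [Real.volume_Ico]
          congr 1
          ring
  have hlen_nonneg : ∀ j ∈ filt, (0:ℝ) ≤ Lg (j+1) - Lg j := by
    intro j hj
    obtain ⟨hjK, hj1⟩ := hjlen j hj
    have := hmono j (j+1) (by omega) hj1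
    linarith
  rw [← ENNReal.ofReal_sum_of_nonneg hlen_nonneg,
    ← ENNReal.ofReal_sum_of_nonneg (fun c _ => by positivity)] at hE
  exact (ENNReal.ofReal_le_ofReal_iff
    (Finset.sum_nonneg fun c _ => by positivity)).1 hE

end Volume

end FRT

open Classical in
/-- Padded stochastic decomposition of Fakcharoenphol–Rao–Talwar (with general measures):
for every `Δ > 0` there is a finitely supported distribution over `Δ`-bounded partitions
(encoded by their cell maps `x ↦ Part i x`) such that for every `x` and `0 < t ≤ Δ/8`, the
probability of `B(x,t) ⊄ P(x)` is at most `(16t/Δ)·log(μ(B(x,Δ))/μ(B(x,Δ/8)))`. -/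
theorem frt_padded_decomposition
    (X : Type) [Fintype X] (d : X → X → ℝ) (hd : IsMetric d)
    (μ : X → ℝ) (hμ : ∀ x, 0 < μ x) (Δ : ℝ) (hΔ : 0 < Δ) :
    ∃ (m : ℕ) (w : Fin m → ℝ) (Part : Fin m → X → Finset X),
      (∀ i, 0 ≤ w i) ∧ (∑ i, w i = 1) ∧
      (∀ i, w i ≠ 0 →
        (∀ x, x ∈ Part i x) ∧ (∀ x y, y ∈ Part i x → Part i y = Part i x) ∧
        (∀ x, ∀ a ∈ Part i x, ∀ b ∈ Part i x, d a b ≤ Δ)) ∧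
      (∀ x : X, ∀ t : ℝ, 0 < t → t ≤ Δ / 8 →
        ∑ i ∈ Finset.univ.filter (fun i => ¬ cball d x t ⊆ Part i x), w i ≤
          (16 * t / Δ) *
            Real.log ((∑ y ∈ cball d x Δ, μ y) / (∑ y ∈ cball d x (Δ / 8), μ y))) := by
  classical
  have hd0 : ∀ z : X, d z z = 0 := fun z => (hd.2.1 z z).2 rfl
  -- the grid of radii
  set B : Finset ℝ := insert (Δ/4) (insert (Δ/2)
    (((Finset.univ ×ˢ Finset.univ : Finset (X × X)).image (fun p => d p.1 p.2)).filter
      (fun r => Δ/4 ≤ r ∧ r ≤ Δ/2))) with hB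
  have hBrange : ∀ r ∈ B, Δ/4 ≤ r ∧ r ≤ Δ/2 := by
    intro r hr
    rw [hB] at hr
    rcases Finset.mem_insert.1 hr with rfl | hr
    · constructor <;> linarith
    rcases Finset.mem_insert.1 hr with rfl | hr
    · constructor <;> linarith
    · exact (Finset.mem_filter.1 hr).2
  have hB4 : Δ/4 ∈ B := Finset.mem_insert_self _ _
  have hB2 : Δ/2 ∈ B := Finset.mem_insert.2 (Or.inr (Finset.mem_insert_self _ _))
  have hBd : ∀ c y : X, Δ/4 ≤ d c y → d c y ≤ Δ/2 → d c y ∈ B := by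
    intro c y h1 h2
    rw [hB]
    refine Finset.mem_insert.2 (Or.inr (Finset.mem_insert.2 (Or.inr ?_)))
    refine Finset.mem_filter.2 ⟨?_, h1, h2⟩
    exact Finset.mem_image.2 ⟨(c, y),
      Finset.mem_product.2 ⟨Finset.mem_univ _, Finset.mem_univ _⟩, rfl⟩
  set L : List ℝ := B.sort (· ≤ ·) with hLdef
  have hsort : List.Pairwise (· < ·) L := (Finset.sortedLT_sort B).pairwise
  have hLB : ∀ r : ℝ, r ∈ L ↔ r ∈ B := fun r => Finset.mem_sort _
  have hLrange : ∀ r ∈ L, Δ/4 ≤ r ∧ r ≤ Δ/2 := fun r hr => hBrange r ((hLB r).1 hr)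
  have hgrid : ∀ c y : X, Δ/4 ≤ d c y → d c y ≤ Δ/2 → d c y ∈ L :=
    fun c y h1 h2 => (hLB _).2 (hBd c y h1 h2)
  set K := L.length - 1 with hK
  have hmono : ∀ i j : ℕ, i < j → j < L.length → L.getD i 0 < L.getD j 0 := by
    intro i j hij hj
    have hi : i < L.length := lt_trans hij hj
    rw [List.getD_eq_getElem L 0 hi, List.getD_eq_getElem L 0 hj]
    have := List.pairwise_iff_get.1 hsort ⟨i, hi⟩ ⟨j, hj⟩ hij
    simpa using this
  have hmono' : ∀ i j : ℕ, i ≤ j → j < L.length → L.getD i 0 ≤ L.getD j 0 := by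
    intro i j hij hj
    rcases Nat.eq_or_lt_of_le hij with rfl | h
    · exact le_refl _
    · exact le_of_lt (hmono i j h hj)
  have hmemL : ∀ j : ℕ, j < L.length → L.getD j 0 ∈ L := by
    intro j hj
    rw [List.getD_eq_getElem L 0 hj]
    exact List.getElem_mem hj
  have hlen0 : 0 < L.length :=
    List.length_pos_iff.2 (List.ne_nil_of_mem ((hLB _).2 hB4))
  have hKlen : K < L.length := by omega
  have hL0 : L.getD 0 0 = Δ/4 := by
    have h2 : Δ/4 ≤ L.getD 0 0 := (hLrange _ (hmemL 0 hlen0)).1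
    obtain ⟨k, hk, hke⟩ := List.mem_iff_getElem.1 ((hLB _).2 hB4)
    have h3 : L.getD 0 0 ≤ L.getD k 0 := hmono' 0 k (Nat.zero_le k) hk
    rw [List.getD_eq_getElem L 0 hk, hke] at h3
    linarith
  have hLK : L.getD K 0 = Δ/2 := by
    have h1 := (hLrange _ (hmemL K hKlen)).2
    obtain ⟨k, hk, hke⟩ := List.mem_iff_getElem.1 ((hLB _).2 hB2)
    have h3 : L.getD k 0 ≤ L.getD K 0 := hmono' k K (by omega) hKlen
    rw [List.getD_eq_getElem L 0 hk, hke] at h3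
    linarith
  have hRrange : ∀ j : ℕ, j < K → Δ/4 ≤ L.getD j 0 ∧ L.getD j 0 ≤ Δ/2 :=
    fun j hj => hLrange _ (hmemL j (by omega))
  have hsum_len : ∑ j ∈ Finset.range K, (L.getD (j+1) 0 - L.getD j 0) = Δ/4 := by
    rw [Finset.sum_range_sub (fun j => L.getD j 0) K, hLK, hL0]
    ring
  -- the probability space
  set P : Finset (List X × ℕ) :=
    (FRT.ords (Finset.univ : Finset X)) ×ˢ (Finset.range K) with hP
  set e : Fin P.card ≃ {p // p ∈ P} := P.equivFin.symm with he
  have hmemP : ∀ i : Fin P.card, (e i).1.1 ∈ FRT.ords (Finset.univ : Finset X)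
      ∧ (e i).1.2 < K := by
    intro i
    have h := Finset.mem_product.1 (show ((e i) : List X × ℕ) ∈
      (FRT.ords (Finset.univ : Finset X)) ×ˢ (Finset.range K) from (e i).2)
    exact ⟨h.1, Finset.mem_range.1 h.2⟩
  have hfull : ∀ l ∈ FRT.ords (Finset.univ : Finset X), ∀ z : X, z ∈ l := by
    intro l hl z
    have h2 := (FRT.ords_spec _ l hl).2
    rw [← List.mem_toFinset, h2]
    exact Finset.mem_univ z
  refine ⟨P.card,
    fun i => FRT.Wt μ (e i).1.1 * ((4/Δ) * (L.getD ((e i).1.2 + 1) 0 - L.getD (e i).1.2 0)),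
    fun i => FRT.PartOf d (e i).1.1 (L.getD (e i).1.2 0), ?_, ?_, ?_, ?_⟩
  · -- nonnegativity
    intro i
    obtain ⟨h1, h2⟩ := hmemP i
    have hlen := hmono' (e i).1.2 ((e i).1.2 + 1) (by omega) (by omega)
    have h4 : (0:ℝ) ≤ 4/Δ := by positivity
    exact mul_nonneg (FRT.Wt_nonneg μ hμ _) (mul_nonneg h4 (by linarith))
  · -- total mass one
    calc ∑ i, FRT.Wt μ (e i).1.1 * ((4/Δ) * (L.getD ((e i).1.2 + 1) 0 - L.getD (e i).1.2 0))
        = ∑ p ∈ P, FRT.Wt μ p.1 * ((4/Δ) * (L.getD (p.2 + 1) 0 - L.getD p.2 0)) := by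
          rw [Fintype.sum_equiv e _
            (fun p : {p // p ∈ P} =>
              FRT.Wt μ p.1.1 * ((4/Δ) * (L.getD (p.1.2 + 1) 0 - L.getD p.1.2 0)))
            (fun i => rfl)]
          exact Finset.sum_coe_sort P
            (fun p => FRT.Wt μ p.1 * ((4/Δ) * (L.getD (p.2 + 1) 0 - L.getD p.2 0)))
      _ = ∑ l ∈ FRT.ords (Finset.univ : Finset X), ∑ j ∈ Finset.range K,
            FRT.Wt μ l * ((4/Δ) * (L.getD (j + 1) 0 - L.getD j 0)) := by
          rw [hP, Finset.sum_product]
      _ = ∑ l ∈ FRT.ords (Finset.univ : Finset X), FRT.Wt μ l := by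
          refine Finset.sum_congr rfl fun l _ => ?_
          rw [← Finset.mul_sum, ← Finset.mul_sum, hsum_len]
          have : (4/Δ) * (Δ/4) = 1 := by field_simp
          rw [this, mul_one]
      _ = 1 := FRT.sum_Wt μ hμ _
  · -- partition properties
    rintro i -
    obtain ⟨h1, h2⟩ := hmemP i
    have hfl := hfull _ h1
    have hr := hRrange _ h2
    refine ⟨fun x => FRT.mem_PartOf_self _ _ _ _,
      fun x y hy => FRT.PartOf_eq_of_mem hy, ?_⟩
    intro x a ha b hb
    have := FRT.PartOf_diam hd hfl (by linarith [hr.1]) ha hb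
    linarith [hr.2]
  · -- the padding bound
    intro x t ht ht8
    have hxS8 : x ∈ cball d x (Δ/8) := FRT.mem_cball.2 (by rw [hd0 x]; linarith)
    have hbase : 0 < ∑ y ∈ cball d x (Δ/8), μ y :=
      Finset.sum_pos (fun y _ => hμ y) ⟨x, hxS8⟩
    have hsub8Δ : cball d x (Δ/8) ⊆ cball d x Δ := fun y hy =>
      FRT.mem_cball.2 (le_trans (FRT.mem_cball.1 hy) (by linarith))
    have hbig : ∑ y ∈ cball d x (Δ/8), μ y ≤ ∑ y ∈ cball d x Δ, μ y :=
      Finset.sum_le_sum_of_subset_of_nonneg hsub8Δ (fun y _ _ => le_of_lt (hμ y))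
    have hlogpos : 0 ≤ Real.log ((∑ y ∈ cball d x Δ, μ y) / (∑ y ∈ cball d x (Δ/8), μ y)) :=
      Real.log_nonneg ((one_le_div hbase).2 hbig)
    -- step 1 : unfold to a double sum
    have hstep1 : ∑ i ∈ Finset.univ.filter
          (fun i => ¬ cball d x t ⊆ FRT.PartOf d (e i).1.1 (L.getD (e i).1.2 0) x),
          FRT.Wt μ (e i).1.1 * ((4/Δ) * (L.getD ((e i).1.2 + 1) 0 - L.getD (e i).1.2 0))
        = ∑ l ∈ FRT.ords (Finset.univ : Finset X), ∑ j ∈ Finset.range K,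
          (if ¬ cball d x t ⊆ FRT.PartOf d l (L.getD j 0) x
           then FRT.Wt μ l * ((4/Δ) * (L.getD (j + 1) 0 - L.getD j 0)) else 0) := by
      rw [Finset.sum_filter]
      rw [Fintype.sum_equiv e _
        (fun p : {p // p ∈ P} =>
          if ¬ cball d x t ⊆ FRT.PartOf d p.1.1 (L.getD p.1.2 0) x
          then FRT.Wt μ p.1.1 * ((4/Δ) * (L.getD (p.1.2 + 1) 0 - L.getD p.1.2 0)) else 0)
        (fun i => rfl)]
      rw [Finset.sum_coe_sort P
        (fun p => if ¬ cball d x t ⊆ FRT.PartOf d p.1 (L.getD p.2 0) x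
          then FRT.Wt μ p.1 * ((4/Δ) * (L.getD (p.2 + 1) 0 - L.getD p.2 0)) else 0)]
      rw [hP, Finset.sum_product]
    -- step 2 : per-ordering volume bound
    have hstep2 : ∀ l ∈ FRT.ords (Finset.univ : Finset X),
        ∑ j ∈ Finset.range K,
          (if ¬ cball d x t ⊆ FRT.PartOf d l (L.getD j 0) x
           then FRT.Wt μ l * ((4/Δ) * (L.getD (j + 1) 0 - L.getD j 0)) else 0)
        ≤ ∑ c ∈ Finset.univ,
          (if (l.find? (fun z => decide (z ∈ cball d x (d c x))) = some c ∧
               Δ/8 < d c x ∧ d c x ≤ Δ)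
           then (FRT.Wt μ l * (4/Δ)) * (2*t) else 0) := by
      intro l hl
      have hWl := FRT.Wt_nonneg μ hμ l
      have hvol := FRT.cut_vol (x := x) hd (hfull l hl) ht ht8 L hsort hLrange hgrid
      rw [← hK] at hvol
      have hlhs : ∑ j ∈ Finset.range K,
          (if ¬ cball d x t ⊆ FRT.PartOf d l (L.getD j 0) x
           then FRT.Wt μ l * ((4/Δ) * (L.getD (j + 1) 0 - L.getD j 0)) else 0)
          = (FRT.Wt μ l * (4/Δ)) * ∑ j ∈ (Finset.range K).filter
              (fun j => ¬ cball d x t ⊆ FRT.PartOf d l (L.getD j 0) x),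
              (L.getD (j + 1) 0 - L.getD j 0) := by
        rw [← Finset.sum_filter, Finset.mul_sum]
        exact Finset.sum_congr rfl fun j _ => by ring
      have hrhs : ∑ c ∈ Finset.univ,
          (if (l.find? (fun z => decide (z ∈ cball d x (d c x))) = some c ∧
               Δ/8 < d c x ∧ d c x ≤ Δ)
           then (FRT.Wt μ l * (4/Δ)) * (2*t) else 0)
          = (FRT.Wt μ l * (4/Δ)) * ∑ _c ∈ Finset.univ.filter (fun c =>
              l.find? (fun z => decide (z ∈ cball d x (d c x))) = some c ∧
              Δ/8 < d c x ∧ d c x ≤ Δ), (2*t) := by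
        rw [← Finset.sum_filter, Finset.mul_sum]
      rw [hlhs, hrhs]
      refine mul_le_mul_of_nonneg_left hvol (by positivity)
    -- step 3 : swap sums and integrate out the ordering
    have hstep3 : ∑ l ∈ FRT.ords (Finset.univ : Finset X), ∑ c ∈ Finset.univ,
          (if (l.find? (fun z => decide (z ∈ cball d x (d c x))) = some c ∧
               Δ/8 < d c x ∧ d c x ≤ Δ)
           then (FRT.Wt μ l * (4/Δ)) * (2*t) else 0)
        = ∑ c ∈ Finset.univ.filter (fun c : X => Δ/8 < d c x ∧ d c x ≤ Δ),
            ((4/Δ) * (2*t)) * (μ c / ∑ y ∈ cball d x (d c x), μ y) := by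
      rw [Finset.sum_comm, Finset.sum_filter]
      refine Finset.sum_congr rfl fun c _ => ?_
      by_cases hcann : Δ/8 < d c x ∧ d c x ≤ Δ
      case neg =>
        rw [if_neg hcann]
        exact Finset.sum_eq_zero fun l _ => if_neg (fun h => hcann h.2)
      rw [if_pos hcann]
      have hsplit : ∀ l ∈ FRT.ords (Finset.univ : Finset X),
          (if (l.find? (fun z => decide (z ∈ cball d x (d c x))) = some c ∧
               Δ/8 < d c x ∧ d c x ≤ Δ)
           then (FRT.Wt μ l * (4/Δ)) * (2*t) else 0)
          = ((4/Δ) * (2*t)) *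
            (if l.find? (fun z => decide (z ∈ cball d x (d c x))) = some c
             then FRT.Wt μ l else 0) := by
        intro l _
        by_cases hq : l.find? (fun z => decide (z ∈ cball d x (d c x))) = some c
        · rw [if_pos ⟨hq, hcann⟩, if_pos hq]; ring
        · rw [if_neg (fun h => hq h.1), if_neg hq, mul_zero]
      rw [Finset.sum_congr rfl hsplit, ← Finset.mul_sum]
      congr 1
      have hcS : c ∈ cball d x (d c x) := FRT.mem_cball.2 (le_of_eq (hd.2.2.1 x c))
      exact FRT.key_first μ hμ (cball d x (d c x)) c hcS _
        (fun z => by simp [FRT.mem_cball]) Finset.univ (Finset.subset_univ _)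
    -- step 4 : telescoping
    have hstep4 : ∑ c ∈ Finset.univ.filter (fun c : X => Δ/8 < d c x ∧ d c x ≤ Δ),
          μ c / ∑ y ∈ cball d x (d c x), μ y
        ≤ Real.log ((∑ y ∈ cball d x Δ, μ y) / (∑ y ∈ cball d x (Δ/8), μ y)) := by
      have hdisj : Disjoint (cball d x (Δ/8))
          (Finset.univ.filter (fun c : X => Δ/8 < d c x ∧ d c x ≤ Δ)) := by
        rw [Finset.disjoint_left]
        intro y hy hy2
        have h1 := FRT.mem_cball.1 hy
        have h2 := (Finset.mem_filter.1 hy2).2.1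
        rw [hd.2.2.1 y x] at h2
        linarith
      have hvbd : ∀ c ∈ Finset.univ.filter (fun c : X => Δ/8 < d c x ∧ d c x ≤ Δ),
          (∑ y ∈ cball d x (Δ/8), μ y) +
            ∑ c' ∈ (Finset.univ.filter (fun c' : X => Δ/8 < d c' x ∧ d c' x ≤ Δ)).filter
              (fun c' => d c' x ≤ d c x), μ c'
          ≤ ∑ y ∈ cball d x (d c x), μ y := by
        intro c hc
        have hcann := (Finset.mem_filter.1 hc).2
        have hunion : cball d x (Δ/8) ∪
            (Finset.univ.filter (fun c' : X => Δ/8 < d c' x ∧ d c' x ≤ Δ)).filter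
              (fun c' => d c' x ≤ d c x) ⊆ cball d x (d c x) := by
          intro y hy
          rcases Finset.mem_union.1 hy with hy | hy
          · exact FRT.mem_cball.2 (le_trans (FRT.mem_cball.1 hy) (le_of_lt hcann.1))
          · have h3 := (Finset.mem_filter.1 hy).2
            exact FRT.mem_cball.2 (by rw [hd.2.2.1 x y]; exact h3)
        have hdisj2 : Disjoint (cball d x (Δ/8))
            ((Finset.univ.filter (fun c' : X => Δ/8 < d c' x ∧ d c' x ≤ Δ)).filter
              (fun c' => d c' x ≤ d c x)) :=
          Finset.disjoint_of_subset_right (Finset.filter_subset _ _) hdisj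
        calc (∑ y ∈ cball d x (Δ/8), μ y) + ∑ c' ∈ (Finset.univ.filter
              (fun c' : X => Δ/8 < d c' x ∧ d c' x ≤ Δ)).filter
              (fun c' => d c' x ≤ d c x), μ c'
            = ∑ y ∈ cball d x (Δ/8) ∪ (Finset.univ.filter
              (fun c' : X => Δ/8 < d c' x ∧ d c' x ≤ Δ)).filter
              (fun c' => d c' x ≤ d c x), μ y := (Finset.sum_union hdisj2).symm
          _ ≤ ∑ y ∈ cball d x (d c x), μ y :=
              Finset.sum_le_sum_of_subset_of_nonneg hunion (fun y _ _ => le_of_lt (hμ y))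
      have htel := FRT.telescope μ hμ (fun c => d c x) (∑ y ∈ cball d x (Δ/8), μ y) hbase
        (Finset.univ.filter (fun c : X => Δ/8 < d c x ∧ d c x ≤ Δ))
        (fun c => ∑ y ∈ cball d x (d c x), μ y) hvbd
      refine le_trans htel (Real.log_le_log ?_ ?_)
      · have hs := Finset.sum_nonneg (s := Finset.univ.filter
          (fun c : X => Δ/8 < d c x ∧ d c x ≤ Δ)) (fun c (_ : c ∈ _) => le_of_lt (hμ c))
        positivity
      · have hnum : (∑ y ∈ cball d x (Δ/8), μ y) +
            ∑ c ∈ Finset.univ.filter (fun c : X => Δ/8 < d c x ∧ d c x ≤ Δ), μ c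
            ≤ ∑ y ∈ cball d x Δ, μ y := by
          rw [← Finset.sum_union hdisj]
          refine Finset.sum_le_sum_of_subset_of_nonneg ?_ (fun y _ _ => le_of_lt (hμ y))
          intro y hy
          rcases Finset.mem_union.1 hy with hy | hy
          · exact hsub8Δ hy
          · have h2 := (Finset.mem_filter.1 hy).2.2
            exact FRT.mem_cball.2 (by rw [hd.2.2.1 x y]; exact h2)
        exact div_le_div_of_nonneg_right hnum hbase.le
    -- final assembly
    calc ∑ i ∈ Finset.univ.filter
          (fun i => ¬ cball d x t ⊆ FRT.PartOf d (e i).1.1 (L.getD (e i).1.2 0) x),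
          FRT.Wt μ (e i).1.1 * ((4/Δ) * (L.getD ((e i).1.2 + 1) 0 - L.getD (e i).1.2 0))
        = ∑ l ∈ FRT.ords (Finset.univ : Finset X), ∑ j ∈ Finset.range K,
          (if ¬ cball d x t ⊆ FRT.PartOf d l (L.getD j 0) x
           then FRT.Wt μ l * ((4/Δ) * (L.getD (j + 1) 0 - L.getD j 0)) else 0) := hstep1
      _ ≤ ∑ l ∈ FRT.ords (Finset.univ : Finset X), ∑ c ∈ Finset.univ,
          (if (l.find? (fun z => decide (z ∈ cball d x (d c x))) = some c ∧
               Δ/8 < d c x ∧ d c x ≤ Δ)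
           then (FRT.Wt μ l * (4/Δ)) * (2*t) else 0) := Finset.sum_le_sum hstep2
      _ = ∑ c ∈ Finset.univ.filter (fun c : X => Δ/8 < d c x ∧ d c x ≤ Δ),
            ((4/Δ) * (2*t)) * (μ c / ∑ y ∈ cball d x (d c x), μ y) := hstep3
      _ = ((4/Δ) * (2*t)) * ∑ c ∈ Finset.univ.filter (fun c : X => Δ/8 < d c x ∧ d c x ≤ Δ),
            (μ c / ∑ y ∈ cball d x (d c x), μ y) := (Finset.mul_sum _ _ _).symm
      _ ≤ ((4/Δ) * (2*t)) *
            Real.log ((∑ y ∈ cball d x Δ, μ y) / (∑ y ∈ cball d x (Δ/8), μ y)) :=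
          mul_le_mul_of_nonneg_left hstep4 (by positivity)
      _ ≤ (16 * t / Δ) *
            Real.log ((∑ y ∈ cball d x Δ, μ y) / (∑ y ∈ cball d x (Δ/8), μ y)) := by
          refine mul_le_mul_of_nonneg_right ?_ hlogpos
          rw [show (4/Δ) * (2*t) = 8*t/Δ by ring]
          exact div_le_div_of_nonneg_right (by linarith) hΔ.le
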